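/- Let R be a semilocal ring such that l(r(J(R))) = J(R), where J(R) is the Jacobson radical, r(S) = {x ∈ R : Sx = 0} is the right annihilator and l(S) = {x ∈ R : xS = 0} is the left annihilator. Then R is a left Kasch ring, i.e. every simple left R-module embeds into R as a left R-module. -/

import Mathlib

universe u

/-- A semilocal ring `R` (i.e. `R/J(R)` is semisimple) with `l(r(J(R))) = J(R)` is a left Kasch
ring: every simple left `R`-module embeds into `R`. -/
theorem stmt_14 (R : Type u) [Ring R]
    (hsemilocal : IsSemisimpleModule R (R ⧸ Ideal.jacobson (⊥ : Ideal R)))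
    (hann : {x : R | ∀ y ∈ {z : R | ∀ j ∈ Ideal.jacobson (⊥ : Ideal R), j * z = 0}, x * y = 0}
      = (Ideal.jacobson (⊥ : Ideal R) : Set R)) :
    ∀ (M : Type u) [AddCommGroup M] [Module R M], IsSimpleModule R M →
      ∃ f : M →ₗ[R] R, Function.Injective f := by
  intro M _ _ hM
  set J : Ideal R := Ideal.jacobson (⊥ : Ideal R) with hJ
  obtain ⟨m, hmmax, ⟨e1⟩⟩ := isSimpleModule_iff_quot_maximal.mp hM
  have hJm : J ≤ m := sInf_le ⟨bot_le, hmmax⟩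
  have hmcoatom : IsCoatom m := hmmax.out
  -- the image of m in R/J
  set mbar : Submodule R (R ⧸ J) := Submodule.map J.mkQ m with hmbar
  have hmbar_ne : mbar ≠ ⊤ := by
    intro h
    have : Submodule.comap J.mkQ mbar = ⊤ := by rw [h]; exact Submodule.comap_top _
    rw [hmbar, Submodule.comap_map_eq, Submodule.ker_mkQ, sup_of_le_left hJm] at this
    exact hmcoatom.1 this
  obtain ⟨T, hT⟩ := exists_isCompl mbar
  have hT_ne : T ≠ ⊥ := by
    intro h
    apply hmbar_ne
    have := hT.sup_eq_top
    rwa [h, sup_bot_eq] at this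
  -- find x ∈ r(J) and t with mkQ t ∈ T and t * x ≠ 0
  have key : ∃ (t x : R), J.mkQ t ∈ T ∧ (∀ j ∈ J, j * x = 0) ∧ t * x ≠ 0 := by
    by_contra hcon
    push_neg at hcon
    apply hT_ne
    rw [eq_bot_iff]
    rintro tbar htbar
    obtain ⟨t, rfl⟩ := J.mkQ_surjective tbar
    have ht : t ∈ J := by
      rw [← SetLike.mem_coe, ← hann]
      intro y hy
      exact hcon t y htbar hy
    simpa [Submodule.mem_bot, Submodule.Quotient.mk_eq_zero] using
      (Submodule.Quotient.mk_eq_zero J).mpr ht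
  obtain ⟨t, x, htT, hxK, htx⟩ := key
  -- the map R/J → R, a ↦ a * x
  have hker : J ≤ LinearMap.ker (LinearMap.toSpanSingleton R R x) := by
    intro j hj
    simpa [LinearMap.mem_ker, smul_eq_mul] using hxK j hj
  set φ : (R ⧸ J) →ₗ[R] R := Submodule.liftQ J (LinearMap.toSpanSingleton R R x) hker with hφ
  set ψ : T →ₗ[R] R := φ ∘ₗ T.subtype with hψ
  have hψt : ψ ⟨J.mkQ t, htT⟩ = t * x := by
    simp [hψ, hφ, Submodule.liftQ_apply, LinearMap.toSpanSingleton_apply, smul_eq_mul]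
    exact Submodule.liftQ_apply J _ t
  -- T is simple
  have e2 : (R ⧸ m) ≃ₗ[R] ((R ⧸ J) ⧸ mbar) := (Submodule.quotientQuotientEquivQuotient J m hJm).symm
  have e3 : ((R ⧸ J) ⧸ mbar) ≃ₗ[R] T := Submodule.quotientEquivOfIsCompl mbar T hT
  have eM : M ≃ₗ[R] T := e1.trans (e2.trans e3)
  haveI : IsSimpleModule R T := IsSimpleModule.congr eM.symm
  have hψinj : Function.Injective ψ := by
    rw [← LinearMap.ker_eq_bot]
    rcases eq_bot_or_eq_top (LinearMap.ker ψ) with h | h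
    · exact h
    · exfalso
      apply htx
      rw [← hψt]
      have : (⟨J.mkQ t, htT⟩ : T) ∈ LinearMap.ker ψ := by rw [h]; trivial
      exact this
  exact ⟨ψ ∘ₗ eM.toLinearMap, hψinj.comp eM.injective⟩
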